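/- Let p, q, r be integers with gcd(q, r) = 1. The cyclic sequence v_1 = (1,0), v_2 = (0,1), v_3 = (−1,p+1), v_4 = (−1,p), v_5 = (q,r) forms complete fan data of length 5 that is LDP fan data with exactly two singular cones if and only if p ≤ 0 and 1 ≤ q ≤ −r−1. -/

import Mathlib

/-- The determinant `det(u, w) = u₁w₂ − u₂w₁` of two integer vectors. -/
def detZ (u w : ℤ × ℤ) : ℤ := u.1 * w.2 - u.2 * w.1

/-- The real vector associated to an integer vector. -/
noncomputable def toR2 (u : ℤ × ℤ) : ℝ × ℝ := ((u.1 : ℝ), (u.2 : ℝ))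

/-- The cone `ℝ_{≥0} u + ℝ_{≥0} w` spanned by two integer vectors. -/
def coneOf (u w : ℤ × ℤ) : Set (ℝ × ℝ) :=
  {x | ∃ a b : ℝ, 0 ≤ a ∧ 0 ≤ b ∧ x = a • toR2 u + b • toR2 w}

/-- Complete fan data of length `d`: a cyclic sequence of primitive integer vectors with
`det(v_i, v_{i+1}) ≥ 1` whose successive cones cover `ℝ²` and have pairwise disjoint
interiors. -/
def IsCompleteFanData (d : ℕ) (v : ZMod d → ℤ × ℤ) : Prop :=
  3 ≤ d ∧
  (∀ i, Int.gcd (v i).1 (v i).2 = 1) ∧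
  (∀ i, 1 ≤ detZ (v i) (v (i + 1))) ∧
  (⋃ i, coneOf (v i) (v (i + 1))) = Set.univ ∧
  ∀ i j, i ≠ j →
    interior (coneOf (v i) (v (i + 1))) ∩ interior (coneOf (v j) (v (j + 1))) = ∅

/-- `f(i) = det(v_{i−1}, v_i) + det(v_i, v_{i+1}) + det(v_{i+1}, v_{i−1})`. -/
def fanF (d : ℕ) (v : ZMod d → ℤ × ℤ) (i : ZMod d) : ℤ :=
  detZ (v (i - 1)) (v i) + detZ (v i) (v (i + 1)) + detZ (v (i + 1)) (v (i - 1))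

/-- LDP fan data: complete fan data with `f(i) ≥ 1` for all `i`. -/
def IsLDPFanData (d : ℕ) (v : ZMod d → ℤ × ℤ) : Prop :=
  IsCompleteFanData d v ∧ ∀ i, 1 ≤ fanF d v i

/-- The number of singular cones, i.e. indices `i` with `det(v_i, v_{i+1}) ≥ 2`. -/
noncomputable def numSingular (d : ℕ) (v : ZMod d → ℤ × ℤ) : ℕ :=
  {i : ZMod d | 2 ≤ detZ (v i) (v (i + 1))}.ncard

/-- Equivalence of fan data: some `GL(2, ℤ)` matrix maps the vector set of one
bijectively onto the vector set of the other. -/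
def FanEquiv {d₁ d₂ : ℕ} (v : ZMod d₁ → ℤ × ℤ) (w : ZMod d₂ → ℤ × ℤ) : Prop :=
  ∃ M : Matrix (Fin 2) (Fin 2) ℤ, IsUnit M.det ∧
    (fun u : ℤ × ℤ => (M 0 0 * u.1 + M 0 1 * u.2, M 1 0 * u.1 + M 1 1 * u.2)) ''
      Set.range v = Set.range w

/-- The cyclic sequence of length `d − 1` obtained by deleting the vector `v_k`:
it lists `v_{k+1}, v_{k+2}, …, v_{k+d−1}`. -/
def deleteAt {d : ℕ} (v : ZMod d → ℤ × ℤ) (k : ZMod d) : ZMod (d - 1) → ℤ × ℤ :=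
  fun i => v (k + 1 + (i.val : ZMod d))

/-- The cyclic sequence of length `d + 1` obtained by inserting `v_k + v_{k+1}`
between `v_k` and `v_{k+1}`. -/
def insertAt {d : ℕ} (v : ZMod d → ℤ × ℤ) (k : ZMod d) : ZMod (d + 1) → ℤ × ℤ :=
  fun i =>
    if i.val ≤ k.val then v ((i.val : ℕ) : ZMod d)
    else if i.val = k.val + 1 then v k + v (k + 1)
    else v ((i.val - 1 : ℕ) : ZMod d)

/-- The data `(1,0), (0,1), (−1,p+1), (−1,p), (q,r)`. -/
def data5 (p q r : ℤ) : ZMod 5 → ℤ × ℤ := fun i =>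
  if i = 0 then (1, 0) else if i = 1 then (0, 1) else if i = 2 then (-1, p + 1)
  else if i = 3 then (-1, p) else (q, r)

/-! ### Auxiliary machinery -/

/-- Real determinant. -/
def detR (u w : ℝ × ℝ) : ℝ := u.1 * w.2 - u.2 * w.1

lemma mem_coneOf_of {u w : ℤ × ℤ} {x : ℝ × ℝ}
    (hD : 0 < detR (toR2 u) (toR2 w))
    (h1 : 0 ≤ detR (toR2 u) x) (h2 : 0 ≤ detR x (toR2 w)) :
    x ∈ coneOf u w := by
  have hD' : detR (toR2 u) (toR2 w) ≠ 0 := hD.ne'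
  refine ⟨detR x (toR2 w) / detR (toR2 u) (toR2 w),
    detR (toR2 u) x / detR (toR2 u) (toR2 w), by positivity, by positivity, ?_⟩
  rw [Prod.ext_iff]
  simp only [Prod.fst_add, Prod.snd_add, Prod.smul_fst, Prod.smul_snd, smul_eq_mul]
  unfold detR toR2 at *
  constructor <;>
    (simp only at hD' ⊢; rw [div_mul_eq_mul_div, div_mul_eq_mul_div, ← add_div, eq_div_iff hD']; ring)

lemma detR_mem_nonneg {u w : ℤ × ℤ} {y : ℝ × ℝ} (hy : y ∈ coneOf u w) :
    ∃ a b : ℝ, 0 ≤ a ∧ 0 ≤ b ∧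
      detR (toR2 u) y = b * detR (toR2 u) (toR2 w) ∧
      detR y (toR2 w) = a * detR (toR2 u) (toR2 w) := by
  obtain ⟨a, b, ha, hb, rfl⟩ := hy
  refine ⟨a, b, ha, hb, ?_, ?_⟩ <;>
    (simp only [detR, Prod.fst_add, Prod.snd_add, Prod.smul_fst, Prod.smul_snd, smul_eq_mul];
     ring)

lemma interior_strict {u w : ℤ × ℤ} {x : ℝ × ℝ}
    (hD : 0 < detR (toR2 u) (toR2 w)) (hx : x ∈ interior (coneOf u w)) :
    0 < detR (toR2 u) x ∧ 0 < detR x (toR2 w) := by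
  obtain ⟨ε, hε, hball⟩ := Metric.mem_nhds_iff.1 (mem_interior_iff_mem_nhds.1 hx)
  set D := detR (toR2 u) (toR2 w) with hDdef
  constructor
  · set t : ℝ := ε / (2 * (‖toR2 w‖ + 1)) with ht
    have htpos : 0 < t := by positivity
    have hmem : x - t • toR2 w ∈ coneOf u w := by
      apply hball
      rw [Metric.mem_ball, dist_eq_norm]
      have : x - t • toR2 w - x = -(t • toR2 w) := by abel
      rw [this, norm_neg, norm_smul, Real.norm_eq_abs, abs_of_pos htpos]
      have hw : (0:ℝ) ≤ ‖toR2 w‖ := norm_nonneg _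
      have : t * (‖toR2 w‖ + 1) = ε / 2 := by
        rw [ht]; field_simp
      nlinarith
    obtain ⟨a, b, ha, hb, h1, h2⟩ := detR_mem_nonneg hmem
    have hlin : detR (toR2 u) (x - t • toR2 w) = detR (toR2 u) x - t * D := by
      simp only [detR, Prod.fst_sub, Prod.snd_sub, Prod.smul_fst, Prod.smul_snd, smul_eq_mul,
        hDdef]
      ring
    have : 0 ≤ detR (toR2 u) (x - t • toR2 w) := by
      rw [h1]; positivity
    nlinarith
  · set t : ℝ := ε / (2 * (‖toR2 u‖ + 1)) with ht
    have htpos : 0 < t := by positivity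
    have hmem : x - t • toR2 u ∈ coneOf u w := by
      apply hball
      rw [Metric.mem_ball, dist_eq_norm]
      have : x - t • toR2 u - x = -(t • toR2 u) := by abel
      rw [this, norm_neg, norm_smul, Real.norm_eq_abs, abs_of_pos htpos]
      have hw : (0:ℝ) ≤ ‖toR2 u‖ := norm_nonneg _
      have : t * (‖toR2 u‖ + 1) = ε / 2 := by
        rw [ht]; field_simp
      nlinarith
    obtain ⟨a, b, ha, hb, h1, h2⟩ := detR_mem_nonneg hmem
    have hlin : detR (x - t • toR2 u) (toR2 w) = detR x (toR2 w) - t * D := by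
      simp only [detR, Prod.fst_sub, Prod.snd_sub, Prod.smul_fst, Prod.smul_snd, smul_eq_mul,
        hDdef]
      ring
    have : 0 ≤ detR (x - t • toR2 u) (toR2 w) := by
      rw [h2]; positivity
    nlinarith

section Eval
variable (p q r : ℤ)

lemma e0 : data5 p q r 0 = (1,0) := rfl
lemma e1 : data5 p q r 1 = (0,1) := rfl
lemma e2 : data5 p q r 2 = (-1,p+1) := rfl
lemma e3 : data5 p q r 3 = (-1,p) := rfl
lemma e4 : data5 p q r 4 = (q,r) := rfl

lemma F0 : fanF 5 (data5 p q r) 0 = 1 - r - q := by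
  simp only [fanF, show (0-1:ZMod 5)=4 from rfl, show (0+1:ZMod 5)=1 from rfl, e0, e1, e4, detZ]
  ring
lemma F1 : fanF 5 (data5 p q r) 1 = 1 - p := by
  simp only [fanF, show (1-1:ZMod 5)=0 from rfl, show (1+1:ZMod 5)=2 from rfl, e0, e1, e2, detZ]
  ring
lemma F2 : fanF 5 (data5 p q r) 2 = 1 := by
  simp only [fanF, show (2-1:ZMod 5)=1 from rfl, show (2+1:ZMod 5)=3 from rfl, e1, e2, e3, detZ]
  ring
lemma F3 : fanF 5 (data5 p q r) 3 = 1 + q := by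
  simp only [fanF, show (3-1:ZMod 5)=2 from rfl, show (3+1:ZMod 5)=4 from rfl, e2, e3, e4, detZ]
  ring
lemma F4 : fanF 5 (data5 p q r) 4 = -2*r - p*q + p := by
  simp only [fanF, show (4-1:ZMod 5)=3 from rfl, show (4+1:ZMod 5)=0 from rfl, e3, e4, e0, detZ]
  ring

lemma D0 : detZ (data5 p q r 0) (data5 p q r 1) = 1 := by simp [e0, e1, detZ]
lemma D1 : detZ (data5 p q r 1) (data5 p q r 2) = 1 := by simp [e1, e2, detZ]
lemma D2 : detZ (data5 p q r 2) (data5 p q r 3) = 1 := by simp only [e2, e3, detZ]; ring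
lemma D3 : detZ (data5 p q r 3) (data5 p q r 4) = -r - p*q := by simp only [e3, e4, detZ]; ring
lemma D4 : detZ (data5 p q r 4) (data5 p q r 0) = -r := by simp [e4, e0, detZ]

lemma dR0 : detR (toR2 ((1,0) : ℤ×ℤ)) (toR2 ((0,1) : ℤ×ℤ)) = 1 := by simp [detR, toR2]
lemma dR1 : detR (toR2 ((0,1) : ℤ×ℤ)) (toR2 ((-1,p+1) : ℤ×ℤ)) = 1 := by simp [detR, toR2]
lemma dR2 : detR (toR2 ((-1,p+1) : ℤ×ℤ)) (toR2 ((-1,p) : ℤ×ℤ)) = 1 := by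
  simp [detR, toR2]
lemma dR3 : detR (toR2 ((-1,p) : ℤ×ℤ)) (toR2 ((q,r) : ℤ×ℤ)) = -(r:ℝ) - p*q := by
  simp [detR, toR2]
lemma dR4 : detR (toR2 ((q,r) : ℤ×ℤ)) (toR2 ((1,0) : ℤ×ℤ)) = -(r:ℝ) := by
  simp [detR, toR2]

end Eval

lemma mem0 {x : ℝ × ℝ} (h1 : 0 ≤ x.2) (h2 : 0 ≤ x.1) :
    x ∈ coneOf ((1,0) : ℤ × ℤ) ((0,1) : ℤ × ℤ) := by
  refine mem_coneOf_of (by rw [dR0]; norm_num) ?_ ?_ <;> simp [detR, toR2] <;> assumption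

lemma mem1 (p : ℤ) {x : ℝ × ℝ} (h1 : 0 ≤ -x.1) (h2 : 0 ≤ (p+1:ℝ) * x.1 + x.2) :
    x ∈ coneOf ((0,1) : ℤ × ℤ) ((-1,p+1) : ℤ × ℤ) := by
  refine mem_coneOf_of (by rw [dR1]; norm_num) ?_ ?_ <;> simp [detR, toR2] <;> push_cast <;>
    linarith

lemma mem2 (p : ℤ) {x : ℝ × ℝ} (h1 : 0 ≤ -x.2 - (p+1:ℝ) * x.1) (h2 : 0 ≤ (p:ℝ) * x.1 + x.2) :
    x ∈ coneOf ((-1,p+1) : ℤ × ℤ) ((-1,p) : ℤ × ℤ) := by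
  refine mem_coneOf_of (by rw [dR2]; norm_num) ?_ ?_ <;> simp [detR, toR2] <;> push_cast <;>
    linarith

lemma mem3 (p q r : ℤ) {x : ℝ × ℝ} (hD : 0 < -(r:ℝ) - p * q)
    (h1 : 0 ≤ -x.2 - (p:ℝ) * x.1) (h2 : 0 ≤ (r:ℝ) * x.1 - (q:ℝ) * x.2) :
    x ∈ coneOf ((-1,p) : ℤ × ℤ) ((q,r) : ℤ × ℤ) := by
  refine mem_coneOf_of (by rw [dR3]; exact hD) ?_ ?_ <;> simp [detR, toR2] <;> push_cast <;>
    linarith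

lemma mem4 (q r : ℤ) {x : ℝ × ℝ} (hD : 0 < -(r:ℝ))
    (h1 : 0 ≤ (q:ℝ) * x.2 - (r:ℝ) * x.1) (h2 : 0 ≤ -x.2) :
    x ∈ coneOf ((q,r) : ℤ × ℤ) ((1,0) : ℤ × ℤ) := by
  refine mem_coneOf_of (by rw [dR4]; exact hD) ?_ ?_ <;> simp [detR, toR2] <;> push_cast <;>
    linarith

lemma zmod5_cases : ∀ k : ZMod 5, k = 0 ∨ k = 1 ∨ k = 2 ∨ k = 3 ∨ k = 4 := by decide

set_option maxHeartbeats 2000000 in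
/-- Characterization of the pentagonal LDP fan data with exactly two singular cones. -/
theorem pentagon_two_singular (p q r : ℤ) (hqr : Int.gcd q r = 1) :
    (IsLDPFanData 5 (data5 p q r) ∧ numSingular 5 (data5 p q r) = 2) ↔
      (p ≤ 0 ∧ 1 ≤ q ∧ q ≤ -r - 1) := by
  constructor
  · rintro ⟨⟨-, hf⟩, hns⟩
    have h0 := hf 0; rw [F0] at h0
    have h1 := hf 1; rw [F1] at h1
    have h3 := hf 3; rw [F3] at h3
    unfold numSingular at hns
    set S := {i : ZMod 5 | 2 ≤ detZ (data5 p q r i) (data5 p q r (i + 1))} with hS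
    have hsub : S ⊆ {3, 4} := by
      intro i hi
      simp only [hS, Set.mem_setOf_eq] at hi
      rcases zmod5_cases i with h|h|h|h|h <;> subst h
      · rw [show ((0:ZMod 5)+1)=1 from rfl, D0] at hi; omega
      · rw [show ((1:ZMod 5)+1)=2 from rfl, D1] at hi; omega
      · rw [show ((2:ZMod 5)+1)=3 from rfl, D2] at hi; omega
      · simp
      · simp
    have hSeq : S = {3, 4} := by
      refine Set.eq_of_subset_of_ncard_le hsub ?_ (Set.toFinite _)
      rw [Set.ncard_pair (by decide : (3:ZMod 5) ≠ 4), hns]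
    have hD3 : 2 ≤ -r - p*q := by
      have : (3:ZMod 5) ∈ S := by rw [hSeq]; simp
      simp only [hS, Set.mem_setOf_eq, show ((3:ZMod 5)+1)=4 from rfl, D3] at this
      exact this
    have hD4 : 2 ≤ -r := by
      have : (4:ZMod 5) ∈ S := by rw [hSeq]; simp
      simp only [hS, Set.mem_setOf_eq, show ((4:ZMod 5)+1)=0 from rfl, D4] at this
      exact this
    have hq1 : 1 ≤ q := by
      rcases eq_or_lt_of_le (by omega : (0:ℤ) ≤ q) with h | h
      · exfalso; rw [← h] at hqr
        have : Int.gcd 0 r = r.natAbs := by simp [Int.gcd]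
        omega
      · omega
    have hqr' : q ≠ -r := by
      intro h
      rw [h] at hqr
      have : Int.gcd (-r) r = r.natAbs := by simp [Int.gcd]
      omega
    exact ⟨by omega, hq1, by omega⟩
  · rintro ⟨hp, hq, hr⟩
    have hp' : (p:ℝ) ≤ 0 := by exact_mod_cast hp
    have hq' : (1:ℝ) ≤ q := by exact_mod_cast hq
    have hr' : (q:ℝ) ≤ -r - 1 := by exact_mod_cast hr
    have hDZ3 : 2 ≤ -r - p*q := by nlinarith [mul_nonneg (by omega : (0:ℤ) ≤ -p) (by omega : (0:ℤ) ≤ q)]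
    have hDR3 : (0:ℝ) < -(r:ℝ) - p*q := by
      have : (2:ℝ) ≤ -(r:ℝ) - p*q := by exact_mod_cast hDZ3
      linarith
    have hDR4 : (0:ℝ) < -(r:ℝ) := by linarith
    -- positivity of all determinants (real)
    have hpos : ∀ i : ZMod 5,
        0 < detR (toR2 (data5 p q r i)) (toR2 (data5 p q r (i + 1))) := by
      intro i
      rcases zmod5_cases i with h|h|h|h|h <;> subst h
      · rw [show ((0:ZMod 5)+1)=1 from rfl, e0, e1, dR0]; norm_num
      · rw [show ((1:ZMod 5)+1)=2 from rfl, e1, e2, dR1]; norm_num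
      · rw [show ((2:ZMod 5)+1)=3 from rfl, e2, e3, dR2]; norm_num
      · rw [show ((3:ZMod 5)+1)=4 from rfl, e3, e4, dR3]; exact hDR3
      · rw [show ((4:ZMod 5)+1)=0 from rfl, e4, e0, dR4]; exact hDR4
    -- covering
    have hcover : (⋃ i, coneOf (data5 p q r i) (data5 p q r (i + 1))) = Set.univ := by
      apply Set.eq_univ_of_forall
      intro x
      simp only [Set.mem_iUnion]
      by_cases hg0 : 0 ≤ x.2
      · by_cases hg1 : 0 ≤ x.1
        · exact ⟨0, mem0 hg0 hg1⟩
        · push_neg at hg1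
          by_cases hg2 : 0 ≤ (p+1:ℝ) * x.1 + x.2
          · exact ⟨1, mem1 p (by linarith) hg2⟩
          · push_neg at hg2
            by_cases hg3 : 0 ≤ (p:ℝ) * x.1 + x.2
            · exact ⟨2, mem2 p (by linarith) hg3⟩
            · push_neg at hg3
              exfalso
              nlinarith [mul_nonneg (by linarith : (0:ℝ) ≤ -p) (by linarith : (0:ℝ) ≤ -x.1)]
      · push_neg at hg0
        by_cases hg4 : 0 ≤ (q:ℝ) * x.2 - r * x.1
        · exact ⟨4, mem4 q r hDR4 hg4 (by linarith)⟩
        · push_neg at hg4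
          by_cases hg3 : 0 ≤ -(p:ℝ) * x.1 - x.2
          · exact ⟨3, mem3 p q r hDR3 (by linarith) (by linarith)⟩
          · push_neg at hg3
            by_cases hg2 : 0 ≤ -(p+1:ℝ) * x.1 - x.2
            · exact ⟨2, mem2 p (by linarith) (by linarith)⟩
            · push_neg at hg2
              by_cases hg1 : 0 ≤ -x.1
              · exact ⟨1, mem1 p hg1 (by linarith)⟩
              · push_neg at hg1
                exfalso
                nlinarith [mul_nonneg (by linarith : (0:ℝ) ≤ -p) (by linarith : (0:ℝ) ≤ x.1)]
    -- disjoint interiors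
    have hdisj : ∀ i j : ZMod 5, i ≠ j →
        interior (coneOf (data5 p q r i) (data5 p q r (i + 1))) ∩
          interior (coneOf (data5 p q r j) (data5 p q r (j + 1))) = ∅ := by
      intro i j hij
      rw [Set.eq_empty_iff_forall_notMem]
      rintro x ⟨hxi, hxj⟩
      have Hi := interior_strict (hpos i) hxi
      have Hj := interior_strict (hpos j) hxj
      rcases zmod5_cases i with h|h|h|h|h <;> subst h <;>
        rcases zmod5_cases j with h|h|h|h|h <;> subst h <;>
        simp only [show ((0:ZMod 5)+1)=1 from rfl, show ((1:ZMod 5)+1)=2 from rfl,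
          show ((2:ZMod 5)+1)=3 from rfl, show ((3:ZMod 5)+1)=4 from rfl,
          show ((4:ZMod 5)+1)=0 from rfl, e0, e1, e2, e3, e4, detR, toR2] at Hi Hj <;>
        obtain ⟨A1, A2⟩ := Hi <;> obtain ⟨B1, B2⟩ := Hj <;>
        push_cast at A1 A2 B1 B2 <;>
        first
          | exact hij rfl
          | linarith
          | nlinarith [A1, A2, B1, B2, hp', hq', hr',
              mul_nonneg (by linarith : (0:ℝ) ≤ -(p:ℝ)) (by linarith : (0:ℝ) ≤ (q:ℝ)),
              mul_pos A1 B1, mul_pos A1 B2, mul_pos A2 B1, mul_pos A2 B2]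
    -- numSingular
    have hnum : numSingular 5 (data5 p q r) = 2 := by
      unfold numSingular
      have hSeq : {i : ZMod 5 | 2 ≤ detZ (data5 p q r i) (data5 p q r (i + 1))}
          = {3, 4} := by
        ext i
        simp only [Set.mem_setOf_eq, Set.mem_insert_iff, Set.mem_singleton_iff]
        rcases zmod5_cases i with h|h|h|h|h <;> subst h
        · rw [show ((0:ZMod 5)+1)=1 from rfl, D0]; decide
        · rw [show ((1:ZMod 5)+1)=2 from rfl, D1]; decide
        · rw [show ((2:ZMod 5)+1)=3 from rfl, D2]; decide
        · rw [show ((3:ZMod 5)+1)=4 from rfl, D3]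
          exact iff_of_true hDZ3 (Or.inl rfl)
        · rw [show ((4:ZMod 5)+1)=0 from rfl, D4]
          exact iff_of_true (by omega) (Or.inr rfl)
      rw [hSeq, Set.ncard_pair (by decide : (3:ZMod 5) ≠ 4)]
    refine ⟨⟨⟨by norm_num, ?_, ?_, hcover, hdisj⟩, ?_⟩, hnum⟩
    · intro i
      rcases zmod5_cases i with h|h|h|h|h <;> subst h
      · rw [e0]; decide
      · rw [e1]; decide
      · rw [e2]; simp [Int.gcd]
      · rw [e3]; simp [Int.gcd]
      · rw [e4]; exact hqr
    · intro i
      rcases zmod5_cases i with h|h|h|h|h <;> subst h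
      · rw [show ((0:ZMod 5)+1)=1 from rfl, D0]
      · rw [show ((1:ZMod 5)+1)=2 from rfl, D1]
      · rw [show ((2:ZMod 5)+1)=3 from rfl, D2]
      · rw [show ((3:ZMod 5)+1)=4 from rfl, D3]; omega
      · rw [show ((4:ZMod 5)+1)=0 from rfl, D4]; omega
    · intro i
      rcases zmod5_cases i with h|h|h|h|h <;> subst h
      · rw [F0]; omega
      · rw [F1]; omega
      · rw [F2]
      · rw [F3]; omega
      · rw [F4]
        nlinarith [mul_nonneg (by omega : (0:ℤ) ≤ -p) (by omega : (0:ℤ) ≤ q - 1)]
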